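/- arXiv:2601.01995 — 7 statements merged into one kernel-verified Lean document; each statement's English description precedes it below -/
import Mathlib

section
/- Let X and Y be real normed vector spaces, F : X → Y a map, C ⊆ X a nonempty set, and ξ† ∈ X with F(ξ†) = y. Let δ ≥ 0 and y^δ ∈ Y satisfy ‖y − y^δ‖ ≤ δ. Let κ ≥ 0 satisfy the stability bound ‖a − b‖ ≤ κ·‖F(a) − F(b)‖ for all a, b ∈ C. If ξ* ∈ C satisfies ‖F(ξ*) − y^δ‖ ≤ ‖F(ξ) − y^δ‖ for all ξ ∈ C (i.e., ξ* is a least-squares minimizer over C), then for every ξ_h ∈ C one has ‖ξ* − ξ†‖ ≤ ‖ξ_h − ξ†‖ + 2κ·(‖F(ξ_h) − F(ξ†)‖ + δ). -/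
/-- Error estimate of Proposition A.1 (regularization by discretization,
least squares version). -/
theorem stmt_0 {X Y : Type*} [NormedAddCommGroup X] [NormedSpace ℝ X]
    [NormedAddCommGroup Y] [NormedSpace ℝ Y]
    (F : X → Y) (C : Set X) (hC : C.Nonempty) (ξdag : X) (y : Y)
    (hF : F ξdag = y)
    (δ : ℝ) (hδ : 0 ≤ δ) (yδ : Y) (hnoise : ‖y - yδ‖ ≤ δ)
    (κ : ℝ) (hκ : 0 ≤ κ)
    (hstab : ∀ a ∈ C, ∀ b ∈ C, ‖a - b‖ ≤ κ * ‖F a - F b‖)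
    (ξstar : X) (hξstar : ξstar ∈ C)
    (hmin : ∀ ξ ∈ C, ‖F ξstar - yδ‖ ≤ ‖F ξ - yδ‖) :
    ∀ ξh ∈ C, ‖ξstar - ξdag‖ ≤ ‖ξh - ξdag‖ + 2 * κ * (‖F ξh - F ξdag‖ + δ) := by
  intro ξh hξh
  have h1 : ‖ξstar - ξdag‖ ≤ ‖ξstar - ξh‖ + ‖ξh - ξdag‖ := norm_sub_le_norm_sub_add_norm_sub _ _ _
  have h2 : ‖ξstar - ξh‖ ≤ κ * ‖F ξstar - F ξh‖ := hstab _ hξstar _ hξh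
  have h3 : ‖F ξstar - F ξh‖ ≤ ‖F ξstar - yδ‖ + ‖yδ - F ξh‖ :=
    norm_sub_le_norm_sub_add_norm_sub _ _ _
  have h4 : ‖F ξstar - yδ‖ ≤ ‖F ξh - yδ‖ := hmin _ hξh
  have h5 : ‖F ξh - yδ‖ ≤ ‖F ξh - F ξdag‖ + δ := by
    calc ‖F ξh - yδ‖ ≤ ‖F ξh - F ξdag‖ + ‖F ξdag - yδ‖ :=
          norm_sub_le_norm_sub_add_norm_sub _ _ _
      _ ≤ ‖F ξh - F ξdag‖ + δ := by rw [hF]; linarith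
  have h6 : ‖yδ - F ξh‖ = ‖F ξh - yδ‖ := norm_sub_rev _ _
  nlinarith [mul_le_mul_of_nonneg_left h3 hκ,
    mul_le_mul_of_nonneg_left (by linarith : ‖F ξstar - yδ‖ + ‖yδ - F ξh‖ ≤ 2*(‖F ξh - F ξdag‖ + δ)) hκ]
end

section
/- Let X and Y be real normed vector spaces, F : X → Y a map, and ξ† ∈ X with F(ξ†) = y. For each n ∈ ℕ let C_n ⊆ X be a nonempty set, p_n ∈ C_n, κ_n ≥ 0 with ‖a − b‖ ≤ κ_n·‖F(a) − F(b)‖ for all a, b ∈ C_n, δ_n ≥ 0, y_n ∈ Y with ‖y − y_n‖ ≤ δ_n, and ξ_n ∈ C_n a minimizer of ξ ↦ ‖F(ξ) − y_n‖ over C_n. If ‖p_n − ξ†‖ → 0, κ_n·‖F(p_n) − F(ξ†)‖ → 0, and κ_n·δ_n → 0 as n → ∞, then ‖ξ_n − ξ†‖ → 0 as n → ∞. -/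
open Filter

/-- Convergence statement of Proposition A.1, along a sequence of
discretization levels and noise levels. -/
theorem stmt_1 {X Y : Type*} [NormedAddCommGroup X] [NormedSpace ℝ X]
    [NormedAddCommGroup Y] [NormedSpace ℝ Y]
    (F : X → Y) (ξdag : X) (y : Y) (hF : F ξdag = y)
    (C : ℕ → Set X) (hC : ∀ n, (C n).Nonempty)
    (p : ℕ → X) (hp : ∀ n, p n ∈ C n)
    (κ : ℕ → ℝ) (hκ : ∀ n, 0 ≤ κ n)
    (hstab : ∀ n, ∀ a ∈ C n, ∀ b ∈ C n, ‖a - b‖ ≤ κ n * ‖F a - F b‖)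
    (δ : ℕ → ℝ) (hδ : ∀ n, 0 ≤ δ n)
    (yn : ℕ → Y) (hnoise : ∀ n, ‖y - yn n‖ ≤ δ n)
    (ξ : ℕ → X) (hξ : ∀ n, ξ n ∈ C n)
    (hmin : ∀ n, ∀ ζ ∈ C n, ‖F (ξ n) - yn n‖ ≤ ‖F ζ - yn n‖)
    (happrox : Tendsto (fun n => ‖p n - ξdag‖) atTop (nhds 0))
    (hFapprox : Tendsto (fun n => κ n * ‖F (p n) - F ξdag‖) atTop (nhds 0))
    (hκδ : Tendsto (fun n => κ n * δ n) atTop (nhds 0)) :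
    Tendsto (fun n => ‖ξ n - ξdag‖) atTop (nhds 0) := by
  have hbound : ∀ n, ‖ξ n - ξdag‖ ≤
      2 * (κ n * ‖F (p n) - F ξdag‖) + 2 * (κ n * δ n) + ‖p n - ξdag‖ := by
    intro n
    have h1 : ‖ξ n - ξdag‖ ≤ ‖ξ n - p n‖ + ‖p n - ξdag‖ := norm_sub_le_norm_sub_add_norm_sub _ _ _
    have h2 : ‖ξ n - p n‖ ≤ κ n * ‖F (ξ n) - F (p n)‖ := hstab n _ (hξ n) _ (hp n)
    have h3 : ‖F (ξ n) - F (p n)‖ ≤ ‖F (ξ n) - yn n‖ + ‖yn n - F (p n)‖ :=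
      norm_sub_le_norm_sub_add_norm_sub _ _ _
    have h4 : ‖F (ξ n) - yn n‖ ≤ ‖F (p n) - yn n‖ := hmin n _ (hp n)
    have h5 : ‖F (p n) - yn n‖ ≤ ‖F (p n) - F ξdag‖ + δ n := by
      calc ‖F (p n) - yn n‖ ≤ ‖F (p n) - y‖ + ‖y - yn n‖ := norm_sub_le_norm_sub_add_norm_sub _ _ _
        _ ≤ ‖F (p n) - F ξdag‖ + δ n := by rw [hF]; exact add_le_add le_rfl (hnoise n)
    have h6 : ‖yn n - F (p n)‖ = ‖F (p n) - yn n‖ := norm_sub_rev _ _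
    have h7 : ‖F (ξ n) - F (p n)‖ ≤ 2 * (‖F (p n) - F ξdag‖ + δ n) := by
      nlinarith
    have h8 : κ n * ‖F (ξ n) - F (p n)‖ ≤ κ n * (2 * (‖F (p n) - F ξdag‖ + δ n)) :=
      mul_le_mul_of_nonneg_left h7 (hκ n)
    nlinarith
  have hge : ∀ n, 0 ≤ ‖ξ n - ξdag‖ := fun n => norm_nonneg _
  have hlim : Tendsto (fun n => 2 * (κ n * ‖F (p n) - F ξdag‖) + 2 * (κ n * δ n) + ‖p n - ξdag‖)
      atTop (nhds 0) := by
    have := ((hFapprox.const_mul 2).add (hκδ.const_mul 2)).add happrox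
    simpa using this
  exact squeeze_zero hge hbound hlim
end

section
/- Let X and Y be real normed vector spaces, F : X → Y and F_τ : X → Y maps, C ⊆ X a nonempty set, and ξ† ∈ X with F(ξ†) = y. Let δ ≥ 0 and y^δ ∈ Y satisfy ‖y − y^δ‖ ≤ δ. Let κ ≥ 0 satisfy ‖a − b‖ ≤ κ·‖F(a) − F(b)‖ for all a, b ∈ C, and let η ≥ 0 satisfy ‖F_τ(ξ) − F(ξ)‖ ≤ η for all ξ ∈ C. Let ε ≥ 0 and let ξ̂ ∈ C be an ε-minimizer of the perturbed least-squares problem, i.e., ‖F_τ(ξ̂) − y^δ‖ ≤ ‖F_τ(ξ) − y^δ‖ + ε for all ξ ∈ C. Then for every ξ_h ∈ C one has ‖ξ̂ − ξ†‖ ≤ ‖ξ_h − ξ†‖ + κ·(2‖F(ξ_h) − F(ξ†)‖ + 2δ + 2η + ε). -/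
/-- Error estimate of Proposition A.2 (regularization by discretization with
perturbed forward operator and approximate optimization). -/
theorem stmt_2 {X Y : Type*} [NormedAddCommGroup X] [NormedSpace ℝ X]
    [NormedAddCommGroup Y] [NormedSpace ℝ Y]
    (F Fτ : X → Y) (C : Set X) (hC : C.Nonempty) (ξdag : X) (y : Y)
    (hF : F ξdag = y)
    (δ : ℝ) (hδ : 0 ≤ δ) (yδ : Y) (hnoise : ‖y - yδ‖ ≤ δ)
    (κ : ℝ) (hκ : 0 ≤ κ)
    (hstab : ∀ a ∈ C, ∀ b ∈ C, ‖a - b‖ ≤ κ * ‖F a - F b‖)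
    (η : ℝ) (hη : 0 ≤ η) (hpert : ∀ ξ ∈ C, ‖Fτ ξ - F ξ‖ ≤ η)
    (ε : ℝ) (hε : 0 ≤ ε)
    (ξhat : X) (hξhat : ξhat ∈ C)
    (hmin : ∀ ξ ∈ C, ‖Fτ ξhat - yδ‖ ≤ ‖Fτ ξ - yδ‖ + ε) :
    ∀ ξh ∈ C, ‖ξhat - ξdag‖ ≤
      ‖ξh - ξdag‖ + κ * (2 * ‖F ξh - F ξdag‖ + 2 * δ + 2 * η + ε) := by
  intro ξh hξh
  have h1 : ‖ξhat - ξdag‖ ≤ ‖ξhat - ξh‖ + ‖ξh - ξdag‖ := by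
    have := norm_add_le (ξhat - ξh) (ξh - ξdag)
    simpa using this
  have h2 : ‖ξhat - ξh‖ ≤ κ * ‖F ξhat - F ξh‖ := hstab _ hξhat _ hξh
  have h3 : ‖F ξhat - F ξh‖ ≤ ‖F ξhat - Fτ ξhat‖ + ‖Fτ ξhat - yδ‖ + ‖yδ - F ξh‖ := by
    have := norm_add_le (F ξhat - Fτ ξhat + (Fτ ξhat - yδ)) (yδ - F ξh)
    have h' := norm_add_le (F ξhat - Fτ ξhat) (Fτ ξhat - yδ)
    calc ‖F ξhat - F ξh‖ = ‖F ξhat - Fτ ξhat + (Fτ ξhat - yδ) + (yδ - F ξh)‖ := by abel_nf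
      _ ≤ ‖F ξhat - Fτ ξhat + (Fτ ξhat - yδ)‖ + ‖yδ - F ξh‖ := this
      _ ≤ ‖F ξhat - Fτ ξhat‖ + ‖Fτ ξhat - yδ‖ + ‖yδ - F ξh‖ := by linarith
  have h4 : ‖F ξhat - Fτ ξhat‖ ≤ η := by
    rw [norm_sub_rev]; exact hpert _ hξhat
  have h5 : ‖Fτ ξhat - yδ‖ ≤ ‖Fτ ξh - yδ‖ + ε := hmin _ hξh
  have h6 : ‖Fτ ξh - yδ‖ ≤ η + ‖F ξh - yδ‖ := by
    have := norm_add_le (Fτ ξh - F ξh) (F ξh - yδ)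
    calc ‖Fτ ξh - yδ‖ = ‖Fτ ξh - F ξh + (F ξh - yδ)‖ := by abel_nf
      _ ≤ ‖Fτ ξh - F ξh‖ + ‖F ξh - yδ‖ := this
      _ ≤ η + ‖F ξh - yδ‖ := by linarith [hpert _ hξh]
  have h7 : ‖F ξh - yδ‖ ≤ ‖F ξh - F ξdag‖ + δ := by
    have := norm_add_le (F ξh - y) (y - yδ)
    calc ‖F ξh - yδ‖ = ‖F ξh - y + (y - yδ)‖ := by abel_nf
      _ ≤ ‖F ξh - y‖ + ‖y - yδ‖ := this
      _ ≤ ‖F ξh - F ξdag‖ + δ := by rw [hF]; linarith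
  have h8 : ‖yδ - F ξh‖ = ‖F ξh - yδ‖ := norm_sub_rev _ _
  have h9 : ‖F ξhat - F ξh‖ ≤ 2 * ‖F ξh - F ξdag‖ + 2 * δ + 2 * η + ε := by linarith
  nlinarith [mul_le_mul_of_nonneg_left h9 hκ]
end

section
/- Let X and Y be real normed vector spaces, F : X → Y a map, and ξ† ∈ X with F(ξ†) = y. For each n ∈ ℕ let C_n ⊆ X be a nonempty set, p_n ∈ C_n, F_n : X → Y a map, κ_n ≥ 0 with ‖a − b‖ ≤ κ_n·‖F(a) − F(b)‖ for all a, b ∈ C_n, η_n ≥ 0 with ‖F_n(ξ) − F(ξ)‖ ≤ η_n for all ξ ∈ C_n, δ_n ≥ 0, y_n ∈ Y with ‖y − y_n‖ ≤ δ_n, ε_n ≥ 0, and ξ̂_n ∈ C_n with ‖F_n(ξ̂_n) − y_n‖ ≤ ‖F_n(ξ) − y_n‖ + ε_n for all ξ ∈ C_n. If there is M ≥ 0 with ε_n ≤ M·δ_n for all n, and ‖p_n − ξ†‖ → 0, κ_n·‖F(p_n) − F(ξ†)‖ → 0, κ_n·η_n → 0, and κ_n·δ_n → 0 as n → ∞,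 then ‖ξ̂_n − ξ†‖ → 0 as n → ∞. -/
open Filter

/-- Convergence statement of Proposition A.2 under the precision choice
ε = O(δ). -/
theorem stmt_3 {X Y : Type*} [NormedAddCommGroup X] [NormedSpace ℝ X]
    [NormedAddCommGroup Y] [NormedSpace ℝ Y]
    (F : X → Y) (ξdag : X) (y : Y) (hF : F ξdag = y)
    (C : ℕ → Set X) (hC : ∀ n, (C n).Nonempty)
    (p : ℕ → X) (hp : ∀ n, p n ∈ C n)
    (Fn : ℕ → X → Y)
    (κ : ℕ → ℝ) (hκ : ∀ n, 0 ≤ κ n)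
    (hstab : ∀ n, ∀ a ∈ C n, ∀ b ∈ C n, ‖a - b‖ ≤ κ n * ‖F a - F b‖)
    (η : ℕ → ℝ) (hη : ∀ n, 0 ≤ η n)
    (hpert : ∀ n, ∀ ξ ∈ C n, ‖Fn n ξ - F ξ‖ ≤ η n)
    (δ : ℕ → ℝ) (hδ : ∀ n, 0 ≤ δ n)
    (yn : ℕ → Y) (hnoise : ∀ n, ‖y - yn n‖ ≤ δ n)
    (ε : ℕ → ℝ) (hε : ∀ n, 0 ≤ ε n)
    (ξhat : ℕ → X) (hξhat : ∀ n, ξhat n ∈ C n)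
    (hmin : ∀ n, ∀ ξ ∈ C n, ‖Fn n (ξhat n) - yn n‖ ≤ ‖Fn n ξ - yn n‖ + ε n)
    (M : ℝ) (hM : 0 ≤ M) (hεδ : ∀ n, ε n ≤ M * δ n)
    (happrox : Tendsto (fun n => ‖p n - ξdag‖) atTop (nhds 0))
    (hFapprox : Tendsto (fun n => κ n * ‖F (p n) - F ξdag‖) atTop (nhds 0))
    (hκη : Tendsto (fun n => κ n * η n) atTop (nhds 0))
    (hκδ : Tendsto (fun n => κ n * δ n) atTop (nhds 0)) :
    Tendsto (fun n => ‖ξhat n - ξdag‖) atTop (nhds 0) := by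
  have key : ∀ n, ‖ξhat n - ξdag‖ ≤
      2 * (κ n * η n) + (2 + M) * (κ n * δ n) + 2 * (κ n * ‖F (p n) - F ξdag‖)
        + ‖p n - ξdag‖ := by
    intro n
    have h1 : ‖Fn n (ξhat n) - yn n‖ ≤ ‖Fn n (p n) - yn n‖ + ε n :=
      hmin n (p n) (hp n)
    have h2 : ‖Fn n (p n) - yn n‖ ≤ η n + ‖F (p n) - F ξdag‖ + δ n := by
      have t : ‖Fn n (p n) - yn n‖ ≤ ‖Fn n (p n) - F (p n)‖ + ‖F (p n) - y‖ + ‖y - yn n‖ := by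
        have := norm_add₃_le (a := Fn n (p n) - F (p n)) (b := F (p n) - y) (c := y - yn n)
        simpa using this
      have := hpert n (p n) (hp n)
      have hrev : ‖F (p n) - y‖ = ‖F (p n) - F ξdag‖ := by rw [hF]
      linarith [hnoise n, t, hrev.le, hrev.ge]
    have h3 : ‖F (ξhat n) - F (p n)‖ ≤
        ‖F (ξhat n) - Fn n (ξhat n)‖ + ‖Fn n (ξhat n) - yn n‖ + ‖yn n - y‖ + ‖y - F (p n)‖ := by
      have := norm_add₃_le (a := F (ξhat n) - Fn n (ξhat n)) (b := Fn n (ξhat n) - yn n)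
        (c := yn n - F (p n))
      have t2 : ‖yn n - F (p n)‖ ≤ ‖yn n - y‖ + ‖y - F (p n)‖ := by
        have := norm_add_le (yn n - y) (y - F (p n)); simpa using this
      calc ‖F (ξhat n) - F (p n)‖
          ≤ ‖F (ξhat n) - Fn n (ξhat n)‖ + ‖Fn n (ξhat n) - yn n‖ + ‖yn n - F (p n)‖ := by
            simpa using this
        _ ≤ _ := by linarith
    have h4 : ‖F (ξhat n) - Fn n (ξhat n)‖ ≤ η n := by
      rw [norm_sub_rev]; exact hpert n (ξhat n) (hξhat n)
    have h5 : ‖yn n - y‖ ≤ δ n := by rw [norm_sub_rev]; exact hnoise n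
    have h6 : ‖y - F (p n)‖ = ‖F (p n) - F ξdag‖ := by rw [hF, norm_sub_rev]
    have h7 : ‖F (ξhat n) - F (p n)‖ ≤ 2 * η n + 2 * δ n + ε n + 2 * ‖F (p n) - F ξdag‖ := by
      linarith
    have h8 : ‖ξhat n - p n‖ ≤ κ n * ‖F (ξhat n) - F (p n)‖ :=
      hstab n (ξhat n) (hξhat n) (p n) (hp n)
    have h9 : κ n * ‖F (ξhat n) - F (p n)‖ ≤
        κ n * (2 * η n + 2 * δ n + ε n + 2 * ‖F (p n) - F ξdag‖) :=
      mul_le_mul_of_nonneg_left h7 (hκ n)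
    have h10 : κ n * ε n ≤ M * (κ n * δ n) := by
      have := mul_le_mul_of_nonneg_left (hεδ n) (hκ n); nlinarith [hκ n, hδ n]
    have htri : ‖ξhat n - ξdag‖ ≤ ‖ξhat n - p n‖ + ‖p n - ξdag‖ := by
      have := norm_add_le (ξhat n - p n) (p n - ξdag); simpa using this
    nlinarith [hκ n, hη n, hδ n, hε n]
  have hg : Tendsto (fun n => 2 * (κ n * η n) + (2 + M) * (κ n * δ n)
      + 2 * (κ n * ‖F (p n) - F ξdag‖) + ‖p n - ξdag‖) atTop (nhds 0) := by
    have := (((hκη.const_mul 2).add (hκδ.const_mul (2 + M))).add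
      (hFapprox.const_mul 2)).add happrox
    simpa using this
  exact squeeze_zero (fun n => norm_nonneg _) key hg
end

section
/- Let X and Y be real normed vector spaces, F : X → Y a map, ξ† ∈ X with F(ξ†) = y. Let s ∈ (0,1], d ∈ ℕ with d ≥ 1, ℓ = 3/2 + 2s/d, k = 2s, and assume ℓ > k; set r = min{1/2, ℓ−k} and t = r/(r+k). Let C₁, C₂, C₃ ≥ 0, and for each h ∈ (0,1] let C_h ⊆ X be a nonempty set containing a point p_h with ‖p_h − ξ†‖ ≤ C₁·h^{1/2} and ‖F(p_h) − F(ξ†)‖ ≤ C₂·h^{ℓ}, and suppose ‖a − b‖ ≤ C₃·h^{−k}·‖F(a) − F(b)‖ for all a, b ∈ C_h. For δ ∈ (0,1], set h(δ) = δ^{1/(r+k)}, let y^δ ∈ Y with ‖y − y^δ‖ ≤ δ, and let ξ_δ ∈ C_{h(δ)} be a minimizer of ξ ↦ ‖F(ξ) − y^δ‖ over C_{h(δ)}. Then ‖ξ_δ − ξ†‖ ≤ (C₁ + 2·C₂·C₃ + 2·C₃)·δ^t for all δ ∈ (0,1]. -/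
/-- Abstract quantitative form of Proposition 3.1: convergence rate for
regularization by discretization with the a priori mesh-size choice
h(δ) = δ^(1/(r+k)). -/
theorem stmt_10 {X Y : Type*} [NormedAddCommGroup X] [NormedSpace ℝ X]
    [NormedAddCommGroup Y] [NormedSpace ℝ Y]
    (F : X → Y) (ξdag : X) (y : Y) (hF : F ξdag = y)
    (s : ℝ) (hs0 : 0 < s) (hs1 : s ≤ 1) (d : ℕ) (hd : 1 ≤ d)
    (ℓ k r t : ℝ)
    (hℓ : ℓ = 3/2 + 2*s/(d : ℝ)) (hk : k = 2*s) (hℓk : ℓ > k)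
    (hr : r = min (1/2) (ℓ - k)) (ht : t = r/(r+k))
    (C₁ C₂ C₃ : ℝ) (hC₁ : 0 ≤ C₁) (hC₂ : 0 ≤ C₂) (hC₃ : 0 ≤ C₃)
    (C : ℝ → Set X) (p : ℝ → X)
    (hCne : ∀ h : ℝ, 0 < h → h ≤ 1 → (C h).Nonempty)
    (hpmem : ∀ h : ℝ, 0 < h → h ≤ 1 → p h ∈ C h)
    (hpapp : ∀ h : ℝ, 0 < h → h ≤ 1 → ‖p h - ξdag‖ ≤ C₁ * h ^ ((1:ℝ)/2))
    (hFapp : ∀ h : ℝ, 0 < h → h ≤ 1 → ‖F (p h) - F ξdag‖ ≤ C₂ * h ^ ℓ)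
    (hstab : ∀ h : ℝ, 0 < h → h ≤ 1 → ∀ a ∈ C h, ∀ b ∈ C h,
      ‖a - b‖ ≤ C₃ * h ^ (-k) * ‖F a - F b‖)
    (yδ : ℝ → Y) (hnoise : ∀ δ : ℝ, 0 < δ → δ ≤ 1 → ‖y - yδ δ‖ ≤ δ)
    (ξδ : ℝ → X)
    (hξmem : ∀ δ : ℝ, 0 < δ → δ ≤ 1 → ξδ δ ∈ C (δ ^ (1/(r+k))))
    (hmin : ∀ δ : ℝ, 0 < δ → δ ≤ 1 → ∀ ξ ∈ C (δ ^ (1/(r+k))),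
      ‖F (ξδ δ) - yδ δ‖ ≤ ‖F ξ - yδ δ‖) :
    ∀ δ : ℝ, 0 < δ → δ ≤ 1 →
      ‖ξδ δ - ξdag‖ ≤ (C₁ + 2*C₂*C₃ + 2*C₃) * δ ^ t := by
  intro δ hδ0 hδ1
  have hk0 : 0 < k := by rw [hk]; linarith
  have hr0 : 0 < r := by rw [hr]; exact lt_min (by norm_num) (by linarith)
  have hrk : 0 < r + k := by linarith
  have ht0 : 0 < t := by rw [ht]; positivity
  set H : ℝ := δ ^ (1/(r+k)) with hH
  have hHpos : 0 < H := Real.rpow_pos_of_pos hδ0 _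
  have hH1 : H ≤ 1 := Real.rpow_le_one hδ0.le hδ1 (by positivity)
  have hpow : ∀ a : ℝ, H ^ a = δ ^ ((1/(r+k)) * a) := fun a => by
    rw [hH, ← Real.rpow_mul hδ0.le]
  -- exponent bounds
  have hrhalf : r ≤ 1/2 := by rw [hr]; exact min_le_left _ _
  have hrℓk : r ≤ ℓ - k := by rw [hr]; exact min_le_right _ _
  have hb1 : H ^ ((1:ℝ)/2) ≤ δ ^ t := by
    rw [hpow]
    apply Real.rpow_le_rpow_of_exponent_ge hδ0 hδ1
    have htr : t = (1/(r+k)) * r := by rw [ht]; ring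
    rw [htr]
    exact mul_le_mul_of_nonneg_left hrhalf (by positivity)
  have hb2 : H ^ (ℓ - k) ≤ δ ^ t := by
    rw [hpow]
    apply Real.rpow_le_rpow_of_exponent_ge hδ0 hδ1
    have htr : t = (1/(r+k)) * r := by rw [ht]; ring
    rw [htr]
    exact mul_le_mul_of_nonneg_left hrℓk (by positivity)
  have hb3 : δ * H ^ (-k) = δ ^ t := by
    rw [hpow]
    nth_rewrite 1 [← Real.rpow_one δ]
    rw [← Real.rpow_add hδ0]
    congr 1
    rw [ht]
    field_simp
    ring
  -- membership and basic facts
  have hpm := hpmem H hHpos hH1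
  have hξm := hξmem δ hδ0 hδ1
  have hstab' := hstab H hHpos hH1 (ξδ δ) hξm (p H) hpm
  have hmin' := hmin δ hδ0 hδ1 (p H) hpm
  have hFp := hFapp H hHpos hH1
  have hnoise' := hnoise δ hδ0 hδ1
  have h2 : ‖F (p H) - yδ δ‖ ≤ C₂ * H ^ ℓ + δ := by
    calc ‖F (p H) - yδ δ‖ ≤ ‖F (p H) - F ξdag‖ + ‖F ξdag - yδ δ‖ := by
          have := dist_triangle (F (p H)) (F ξdag) (yδ δ)
          simpa [dist_eq_norm] using this
      _ ≤ C₂ * H ^ ℓ + δ := by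
          rw [hF]
          exact add_le_add (by rw [← hF]; exact hFp) hnoise'
  have h1 : ‖F (ξδ δ) - F (p H)‖ ≤ 2 * (C₂ * H ^ ℓ + δ) := by
    calc ‖F (ξδ δ) - F (p H)‖ ≤ ‖F (ξδ δ) - yδ δ‖ + ‖yδ δ - F (p H)‖ := by
          have := dist_triangle (F (ξδ δ)) (yδ δ) (F (p H))
          simpa [dist_eq_norm] using this
      _ ≤ ‖F (p H) - yδ δ‖ + ‖F (p H) - yδ δ‖ := by
          rw [norm_sub_rev (yδ δ)]
          exact add_le_add hmin' le_rfl
      _ ≤ 2 * (C₂ * H ^ ℓ + δ) := by linarith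
  have hHk : (0:ℝ) < H ^ (-k) := Real.rpow_pos_of_pos hHpos _
  have hsplit : H ^ (-k) * H ^ ℓ = H ^ (ℓ - k) := by
    rw [← Real.rpow_add hHpos]; ring_nf
  have hmain : ‖ξδ δ - p H‖ ≤ 2*C₂*C₃ * H ^ (ℓ - k) + 2*C₃ * (δ * H ^ (-k)) := by
    calc ‖ξδ δ - p H‖ ≤ C₃ * H ^ (-k) * ‖F (ξδ δ) - F (p H)‖ := hstab'
      _ ≤ C₃ * H ^ (-k) * (2 * (C₂ * H ^ ℓ + δ)) := by
          apply mul_le_mul_of_nonneg_left h1 (by positivity)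
      _ = 2*C₂*C₃ * (H ^ (-k) * H ^ ℓ) + 2*C₃ * (δ * H ^ (-k)) := by ring
      _ = 2*C₂*C₃ * H ^ (ℓ - k) + 2*C₃ * (δ * H ^ (-k)) := by rw [hsplit]
  have hfinal : ‖ξδ δ - ξdag‖ ≤ ‖ξδ δ - p H‖ + ‖p H - ξdag‖ := by
    have := dist_triangle (ξδ δ) (p H) ξdag
    simpa [dist_eq_norm] using this
  have hpa := hpapp H hHpos hH1
  have e1 : 2*C₂*C₃ * H ^ (ℓ - k) ≤ 2*C₂*C₃ * δ ^ t :=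
    mul_le_mul_of_nonneg_left hb2 (by positivity)
  have e2 : C₁ * H ^ ((1:ℝ)/2) ≤ C₁ * δ ^ t :=
    mul_le_mul_of_nonneg_left hb1 hC₁
  calc ‖ξδ δ - ξdag‖ ≤ ‖ξδ δ - p H‖ + ‖p H - ξdag‖ := hfinal
    _ ≤ (2*C₂*C₃ * H ^ (ℓ - k) + 2*C₃ * (δ * H ^ (-k))) + C₁ * H ^ ((1:ℝ)/2) := by
        linarith
    _ ≤ (C₁ + 2*C₂*C₃ + 2*C₃) * δ ^ t := by
        rw [hb3] at *
        nlinarith [hb3]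
end

section
/- Let X and Y be real normed vector spaces, F : X → Y a map, ξ† ∈ X with F(ξ†) = y. Let s ∈ (0,1], d ∈ ℕ with d ≥ 1, ℓ = 3/2 + 2s/d, k = 2s, and assume ℓ > k; set r = min{1/2, ℓ−k} and t = r/(r+k). Let C₁, …, C₅ ≥ 0, and for each h ∈ (0,1] let C_h ⊆ X be a nonempty set containing a point p_h with ‖p_h − ξ†‖ ≤ C₁·h^{1/2} and ‖F(p_h) − F(ξ†)‖ ≤ C₂·h^{ℓ}, and suppose ‖a − b‖ ≤ C₃·h^{−k}·‖F(a) − F(b)‖ for all a, b ∈ C_h. For δ ∈ (0,1], set h(δ) = δ^{1/(r+k)} and τ(δ) = min{δ^{1/k²}, h(δ)}, let y^δ ∈ Y with ‖y − y^δ‖ ≤ δ, let F_{τ(δ)} : X → Y satisfy ‖F_{τ(δ)}(ξ) − F(ξ)‖ ≤ C₄·τ(δ)^{k²} for all ξ ∈ C_{h(δ)}, let ε ∈ [0, C₅·δ], and let ξ̂_δ ∈ C_{h(δ)} satisfy ‖F_{τ(δ)}(ξ̂_δ) − y^δ‖ ≤ ‖F_{τ(δ)}(ξ) − y^δ‖ +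 ε for all ξ ∈ C_{h(δ)}. Then ‖ξ̂_δ − ξ†‖ ≤ (C₁ + 2·C₂·C₃ + C₃·(2 + 2·C₄ + C₅))·δ^t for all δ ∈ (0,1]. -/
/-- Abstract quantitative form of Theorem 4.4: balanced convergence rate under
the parameter choices ε = O(δ), τ(δ) = min{δ^(1/k²), h(δ)},
h(δ) = δ^(1/(r+k)). -/
theorem stmt_11 {X Y : Type*} [NormedAddCommGroup X] [NormedSpace ℝ X]
    [NormedAddCommGroup Y] [NormedSpace ℝ Y]
    (F : X → Y) (ξdag : X) (y : Y) (hF : F ξdag = y)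
    (s : ℝ) (hs0 : 0 < s) (hs1 : s ≤ 1) (d : ℕ) (hd : 1 ≤ d)
    (ℓ k r t : ℝ)
    (hℓ : ℓ = 3/2 + 2*s/(d : ℝ)) (hk : k = 2*s) (hℓk : ℓ > k)
    (hr : r = min (1/2) (ℓ - k)) (ht : t = r/(r+k))
    (C₁ C₂ C₃ C₄ C₅ : ℝ)
    (hC₁ : 0 ≤ C₁) (hC₂ : 0 ≤ C₂) (hC₃ : 0 ≤ C₃) (hC₄ : 0 ≤ C₄) (hC₅ : 0 ≤ C₅)
    (C : ℝ → Set X) (p : ℝ → X)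
    (hCne : ∀ h : ℝ, 0 < h → h ≤ 1 → (C h).Nonempty)
    (hpmem : ∀ h : ℝ, 0 < h → h ≤ 1 → p h ∈ C h)
    (hpapp : ∀ h : ℝ, 0 < h → h ≤ 1 → ‖p h - ξdag‖ ≤ C₁ * h ^ ((1:ℝ)/2))
    (hFapp : ∀ h : ℝ, 0 < h → h ≤ 1 → ‖F (p h) - F ξdag‖ ≤ C₂ * h ^ ℓ)
    (hstab : ∀ h : ℝ, 0 < h → h ≤ 1 → ∀ a ∈ C h, ∀ b ∈ C h,
      ‖a - b‖ ≤ C₃ * h ^ (-k) * ‖F a - F b‖)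
    (yδ : ℝ → Y) (hnoise : ∀ δ : ℝ, 0 < δ → δ ≤ 1 → ‖y - yδ δ‖ ≤ δ)
    (Fτ : ℝ → X → Y)
    (hpert : ∀ δ : ℝ, 0 < δ → δ ≤ 1 → ∀ ξ ∈ C (δ ^ (1/(r+k))),
      ‖Fτ δ ξ - F ξ‖ ≤ C₄ * (min (δ ^ (1/k^2)) (δ ^ (1/(r+k)))) ^ (k^2))
    (ε : ℝ → ℝ) (hε0 : ∀ δ : ℝ, 0 < δ → δ ≤ 1 → 0 ≤ ε δ)
    (hεδ : ∀ δ : ℝ, 0 < δ → δ ≤ 1 → ε δ ≤ C₅ * δ)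
    (ξhat : ℝ → X)
    (hξmem : ∀ δ : ℝ, 0 < δ → δ ≤ 1 → ξhat δ ∈ C (δ ^ (1/(r+k))))
    (hmin : ∀ δ : ℝ, 0 < δ → δ ≤ 1 → ∀ ξ ∈ C (δ ^ (1/(r+k))),
      ‖Fτ δ (ξhat δ) - yδ δ‖ ≤ ‖Fτ δ ξ - yδ δ‖ + ε δ) :
    ∀ δ : ℝ, 0 < δ → δ ≤ 1 →
      ‖ξhat δ - ξdag‖ ≤ (C₁ + 2*C₂*C₃ + C₃*(2 + 2*C₄ + C₅)) * δ ^ t := by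

  intro δ hδ0 hδ1
  have hk0 : 0 < k := by rw [hk]; linarith
  have hℓk0 : 0 < ℓ - k := by linarith
  have hr0 : 0 < r := by rw [hr]; exact lt_min (by norm_num) hℓk0
  have hrk : 0 < r + k := by linarith
  set h : ℝ := δ ^ (1/(r+k)) with hh
  have hh0 : 0 < h := Real.rpow_pos_of_pos hδ0 _
  have hh1 : h ≤ 1 := Real.rpow_le_one hδ0.le hδ1 (by positivity)
  have hτ : (min (δ ^ (1/k^2)) h) ^ (k^2) ≤ δ := by
    have h1 : (min (δ ^ (1/k^2)) h) ^ (k^2) ≤ (δ ^ (1/k^2)) ^ (k^2) :=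
      Real.rpow_le_rpow (le_min (Real.rpow_nonneg hδ0.le _) hh0.le)
        (min_le_left _ _) (by positivity)
    calc (min (δ ^ (1/k^2)) h) ^ (k^2) ≤ (δ ^ (1/k^2)) ^ (k^2) := h1
      _ = δ := by
        rw [← Real.rpow_mul hδ0.le, one_div_mul_cancel (by positivity), Real.rpow_one]
  -- exponent algebra
  have hA : h ^ (-k) * h ^ ℓ ≤ δ ^ t := by
    rw [← Real.rpow_add hh0]
    have : h ^ (-k + ℓ) = δ ^ ((ℓ - k)/(r+k)) := by
      rw [hh, ← Real.rpow_mul hδ0.le]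
      ring_nf
    rw [this]
    apply Real.rpow_le_rpow_of_exponent_ge hδ0 hδ1
    rw [ht]
    gcongr
    rw [hr]; exact min_le_right _ _
  have hB : h ^ (-k) * δ ≤ δ ^ t := by
    have : h ^ (-k) * δ = δ ^ t := by
      rw [hh, ← Real.rpow_mul hδ0.le]
      nth_rewrite 2 [show δ = δ ^ (1:ℝ) by rw [Real.rpow_one]]
      rw [← Real.rpow_add hδ0, ht]
      congr 1
      field_simp
      ring
    rw [this]
  have hC' : h ^ ((1:ℝ)/2) ≤ δ ^ t := by
    rw [hh, ← Real.rpow_mul hδ0.le]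
    apply Real.rpow_le_rpow_of_exponent_ge hδ0 hδ1
    rw [ht]
    have h2 : r ≤ 1/2 := by rw [hr]; exact min_le_left _ _
    have he : (1:ℝ)/(r+k) * (1/2) = (1/2)/(r+k) := by ring
    rw [he]
    gcongr
  -- memberships
  have hph := hpmem h hh0 hh1
  have hξm := hξmem δ hδ0 hδ1
  -- perturbation bounds
  have e1 : ‖Fτ δ (ξhat δ) - F (ξhat δ)‖ ≤ C₄ * δ := by
    have := hpert δ hδ0 hδ1 (ξhat δ) hξm
    calc ‖Fτ δ (ξhat δ) - F (ξhat δ)‖ ≤ C₄ * (min (δ ^ (1/k^2)) h) ^ (k^2) := this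
      _ ≤ C₄ * δ := by exact mul_le_mul_of_nonneg_left hτ hC₄
  have e1' : ‖Fτ δ (p h) - F (p h)‖ ≤ C₄ * δ := by
    have := hpert δ hδ0 hδ1 (p h) hph
    calc ‖Fτ δ (p h) - F (p h)‖ ≤ C₄ * (min (δ ^ (1/k^2)) h) ^ (k^2) := this
      _ ≤ C₄ * δ := mul_le_mul_of_nonneg_left hτ hC₄
  have e2 : ‖Fτ δ (ξhat δ) - yδ δ‖ ≤ ‖Fτ δ (p h) - yδ δ‖ + ε δ := by
    exact hmin δ hδ0 hδ1 (p h) hph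
  have hFp : ‖F (p h) - y‖ ≤ C₂ * h ^ ℓ := by
    rw [← hF]; exact hFapp h hh0 hh1
  have hn := hnoise δ hδ0 hδ1
  have e3 : ‖Fτ δ (p h) - yδ δ‖ ≤ C₄ * δ + C₂ * h ^ ℓ + δ := by
    calc ‖Fτ δ (p h) - yδ δ‖
        = ‖(Fτ δ (p h) - F (p h)) + (F (p h) - y) + (y - yδ δ)‖ := by abel_nf
      _ ≤ ‖(Fτ δ (p h) - F (p h)) + (F (p h) - y)‖ + ‖y - yδ δ‖ := norm_add_le _ _
      _ ≤ ‖Fτ δ (p h) - F (p h)‖ + ‖F (p h) - y‖ + ‖y - yδ δ‖ := by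
          gcongr; exact norm_add_le _ _
      _ ≤ C₄ * δ + C₂ * h ^ ℓ + δ := add_le_add (add_le_add e1' hFp) hn
  have hεb := hεδ δ hδ0 hδ1
  have key : ‖F (ξhat δ) - F (p h)‖ ≤ 2*C₄*δ + 2*C₂*h^ℓ + (2+C₅)*δ := by
    calc ‖F (ξhat δ) - F (p h)‖
        = ‖(F (ξhat δ) - Fτ δ (ξhat δ)) + (Fτ δ (ξhat δ) - yδ δ) + (yδ δ - y) + (y - F (p h))‖ := by
          abel_nf
      _ ≤ ‖(F (ξhat δ) - Fτ δ (ξhat δ)) + (Fτ δ (ξhat δ) - yδ δ) + (yδ δ - y)‖ + ‖y - F (p h)‖ :=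
          norm_add_le _ _
      _ ≤ ‖(F (ξhat δ) - Fτ δ (ξhat δ)) + (Fτ δ (ξhat δ) - yδ δ)‖ + ‖yδ δ - y‖ + ‖y - F (p h)‖ := by
          gcongr; exact norm_add_le _ _
      _ ≤ ‖F (ξhat δ) - Fτ δ (ξhat δ)‖ + ‖Fτ δ (ξhat δ) - yδ δ‖ + ‖yδ δ - y‖ + ‖y - F (p h)‖ := by
          gcongr; exact norm_add_le _ _
      _ ≤ C₄*δ + (C₄ * δ + C₂ * h ^ ℓ + δ + ε δ) + δ + (C₂ * h ^ ℓ) := by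
          refine add_le_add (add_le_add (add_le_add ?_ ?_) ?_) ?_
          · rw [norm_sub_rev]; exact e1
          · exact e2.trans (by linarith)
          · rw [norm_sub_rev]; exact hn
          · rw [norm_sub_rev]; exact hFp
      _ ≤ 2*C₄*δ + 2*C₂*h^ℓ + (2+C₅)*δ := by linarith
  have hstab' : ‖ξhat δ - p h‖ ≤ C₃ * h ^ (-k) * ‖F (ξhat δ) - F (p h)‖ :=
    hstab h hh0 hh1 (ξhat δ) hξm (p h) hph
  have hpξ := hpapp h hh0 hh1
  have hnk : (0:ℝ) ≤ h ^ (-k) := (Real.rpow_pos_of_pos hh0 _).le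
  have hδt : (0:ℝ) ≤ δ ^ t := (Real.rpow_pos_of_pos hδ0 _).le
  calc ‖ξhat δ - ξdag‖ = ‖(ξhat δ - p h) + (p h - ξdag)‖ := by abel_nf
    _ ≤ ‖ξhat δ - p h‖ + ‖p h - ξdag‖ := norm_add_le _ _
    _ ≤ C₃ * h ^ (-k) * (2*C₄*δ + 2*C₂*h^ℓ + (2+C₅)*δ) + C₁ * h ^ ((1:ℝ)/2) := by
        exact add_le_add (hstab'.trans (mul_le_mul_of_nonneg_left key (by positivity))) hpξ
    _ = 2*C₂*C₃ * (h ^ (-k) * h ^ ℓ) + C₃*(2 + 2*C₄ + C₅) * (h ^ (-k) * δ) + C₁ * h ^ ((1:ℝ)/2) := by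
        ring
    _ ≤ 2*C₂*C₃ * δ ^ t + C₃*(2 + 2*C₄ + C₅) * δ ^ t + C₁ * δ ^ t := by
        gcongr
    _ = (C₁ + 2*C₂*C₃ + C₃*(2 + 2*C₄ + C₅)) * δ ^ t := by ring
end

section
/- Let X and Y be real normed vector spaces, F : X → Y a map, C ⊆ X a nonempty set, ξ† ∈ X with F(ξ†) = y, and y^δ ∈ Y with ‖y − y^δ‖ ≤ δ for some δ ≥ 0. Fix p ∈ C and let κ ≥ 0 satisfy the weaker, point-based stability bound ‖ξ − p‖ ≤ κ·‖F(ξ) − F(p)‖ for all ξ ∈ C. If ξ* ∈ C satisfies ‖F(ξ*) − y^δ‖ ≤ ‖F(ξ) − y^δ‖ for all ξ ∈ C, then ‖ξ* − ξ†‖ ≤ ‖p − ξ†‖ + 2κ·(‖F(p) − F(ξ†)‖ + δ). -/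
/-- Variant of the error estimate of Proposition A.1 with a point-based
stability constant relative to a fixed comparison point p ∈ C. -/
theorem stmt_13 {X Y : Type*} [NormedAddCommGroup X] [NormedSpace ℝ X]
    [NormedAddCommGroup Y] [NormedSpace ℝ Y]
    (F : X → Y) (C : Set X) (hC : C.Nonempty) (ξdag : X) (y : Y)
    (hF : F ξdag = y)
    (δ : ℝ) (hδ : 0 ≤ δ) (yδ : Y) (hnoise : ‖y - yδ‖ ≤ δ)
    (p : X) (hp : p ∈ C)
    (κ : ℝ) (hκ : 0 ≤ κ)
    (hstab : ∀ ξ ∈ C, ‖ξ - p‖ ≤ κ * ‖F ξ - F p‖)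
    (ξstar : X) (hξstar : ξstar ∈ C)
    (hmin : ∀ ξ ∈ C, ‖F ξstar - yδ‖ ≤ ‖F ξ - yδ‖) :
    ‖ξstar - ξdag‖ ≤ ‖p - ξdag‖ + 2 * κ * (‖F p - F ξdag‖ + δ) := by
  have h1 : ‖ξstar - ξdag‖ ≤ ‖ξstar - p‖ + ‖p - ξdag‖ := norm_sub_le_norm_sub_add_norm_sub _ _ _
  have h2 := hstab ξstar hξstar
  have h3 : ‖F ξstar - F p‖ ≤ ‖F ξstar - yδ‖ + ‖yδ - F p‖ := norm_sub_le_norm_sub_add_norm_sub _ _ _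
  have h4 := hmin p hp
  have h5 : ‖F p - yδ‖ ≤ ‖F p - F ξdag‖ + δ := by
    calc ‖F p - yδ‖ ≤ ‖F p - F ξdag‖ + ‖F ξdag - yδ‖ := norm_sub_le_norm_sub_add_norm_sub _ _ _
    _ ≤ ‖F p - F ξdag‖ + δ := by rw [hF]; linarith
  have h6 : ‖yδ - F p‖ = ‖F p - yδ‖ := norm_sub_rev _ _
  have h7 : ‖F ξstar - F p‖ ≤ 2 * (‖F p - F ξdag‖ + δ) := by linarith
  have h8 : κ * ‖F ξstar - F p‖ ≤ κ * (2 * (‖F p - F ξdag‖ + δ)) :=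
    mul_le_mul_of_nonneg_left h7 hκ
  linarith
end
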